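/- arXiv:2112.01904 — 3 statements merged into one kernel-verified Lean document; each statement's English description precedes it below -/
import Mathlib

section
/- A pair (i,j) with i ≠ j is an edge of the fill graph G_A⁺ if and only if the pattern graph G_A contains a simple path from i to j all of whose internal vertices have indices smaller than min(i,j). -/
/-- Eliminating vertex `j` of a graph: add a clique on the higher-numbered
neighbors of `j`. -/
def elim {n : ℕ} (G : Fin n → Fin n → Prop) (j : Fin n) : Fin n → Fin n → Prop :=
  fun a b => G a b ∨ (a ≠ b ∧ j < a ∧ j < b ∧ G j a ∧ G j b)

/-- The fill graph: eliminate the vertices `0, 1, …, n-1` in order. -/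
def fillRel {n : ℕ} (G : Fin n → Fin n → Prop) : Fin n → Fin n → Prop :=
  (List.finRange n).foldl elim G

open SimpleGraph

private lemma adj_of_no_internal {n : ℕ} {G : SimpleGraph (Fin n)} {a b : Fin n}
    (hab : a ≠ b) (p : G.Walk a b)
    (h : ∀ v ∈ p.support, v ≠ a → v ≠ b → False) : G.Adj a b := by
  cases p with
  | nil => exact absurd rfl hab
  | @cons _ c _ h' q =>
    by_cases hc : c = b
    · subst hc; exact h'
    · exact (h c (List.mem_cons_of_mem _ q.start_mem_support) h'.ne' hc).elim

private lemma fill_invariant {n : ℕ} (G : SimpleGraph (Fin n)) (k : ℕ) (a b : Fin n) :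
    (List.foldl elim G.Adj ((List.finRange n).take k)) a b ↔
      a ≠ b ∧ ∃ p : G.Walk a b, ∀ v ∈ p.support, v ≠ a → v ≠ b →
        (v : ℕ) < k ∧ v < a ∧ v < b := by
  induction k generalizing a b with
  | zero =>
    simp only [List.take_zero, List.foldl_nil]
    constructor
    · intro h
      refine ⟨h.ne, Walk.cons h Walk.nil, ?_⟩
      intro v hv hva hvb
      simp only [Walk.support_cons, Walk.support_nil, List.mem_cons,
        List.mem_singleton, List.not_mem_nil, or_false] at hv
      rcases hv with rfl | rfl
      · exact absurd rfl hva
      · exact absurd rfl hvb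
    · rintro ⟨hab, p, hp⟩
      exact adj_of_no_internal hab p
        (fun v hv hva hvb => by simpa using (hp v hv hva hvb).1)
  | succ k ih =>
    by_cases hk : k < n
    case neg =>
      have hx : (List.finRange n).take (k+1) = (List.finRange n).take k := by
        rw [List.take_of_length_le (by simp; omega), List.take_of_length_le (by simp; omega)]
      rw [hx, ih]
      constructor <;> rintro ⟨hab, p, hp⟩ <;> refine ⟨hab, p, fun v hv hva hvb => ?_⟩
      · obtain ⟨h1, h2, h3⟩ := hp v hv hva hvb
        exact ⟨by omega, h2, h3⟩
      · obtain ⟨h1, h2, h3⟩ := hp v hv hva hvb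
        have hvn : (v : ℕ) < n := v.isLt
        exact ⟨by omega, h2, h3⟩
    case pos =>
      set kF : Fin n := ⟨k, hk⟩ with hkF
      have hstep : (List.finRange n).take (k+1) = (List.finRange n).take k ++ [kF] := by
        rw [List.take_succ, List.getElem?_eq_getElem (by simpa using hk)]
        simp [List.getElem_finRange, Fin.cast, hkF]
      rw [hstep, List.foldl_append]
      simp only [List.foldl_cons, List.foldl_nil, elim]
      constructor
      · rintro (h | ⟨hab, hka, hkb, h1, h2⟩)
        · obtain ⟨hab, p, hp⟩ := (ih a b).mp h
          refine ⟨hab, p, fun v hv hva hvb => ?_⟩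
          obtain ⟨g1, g2, g3⟩ := hp v hv hva hvb
          exact ⟨by omega, g2, g3⟩
        · obtain ⟨-, p1, hp1⟩ := (ih kF a).mp h1
          obtain ⟨-, p2, hp2⟩ := (ih kF b).mp h2
          refine ⟨hab, p1.reverse.append p2, fun v hv hva hvb => ?_⟩
          rw [Walk.support_append] at hv
          rcases List.mem_append.mp hv with hv | hv
          · rw [Walk.support_reverse, List.mem_reverse] at hv
            by_cases hvk : v = kF
            · subst hvk; exact ⟨by simp [hkF], hka, hkb⟩
            · obtain ⟨g1, g2, g3⟩ := hp1 v hv hvk hva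
              exact ⟨by omega, g3, lt_trans g2 hkb⟩
          · have hv' := List.mem_of_mem_tail hv
            by_cases hvk : v = kF
            · subst hvk; exact ⟨by simp [hkF], hka, hkb⟩
            · obtain ⟨g1, g2, g3⟩ := hp2 v hv' hvk hvb
              exact ⟨by omega, lt_trans g2 hka, g3⟩
      · rintro ⟨hab, p, hp⟩
        have hq : ∀ v ∈ p.bypass.support, v ≠ a → v ≠ b →
            (v : ℕ) < k + 1 ∧ v < a ∧ v < b :=
          fun v hv => hp v (p.support_bypass_subset hv)
        set q := p.bypass with hqdef
        have hqp : q.IsPath := p.bypass_isPath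
        by_cases hmem : kF ∈ q.support ∧ kF ≠ a ∧ kF ≠ b
        case neg =>
          left
          refine (ih a b).mpr ⟨hab, q, fun v hv hva hvb => ?_⟩
          obtain ⟨g1, g2, g3⟩ := hq v hv hva hvb
          refine ⟨?_, g2, g3⟩
          rcases eq_or_ne v kF with rfl | hne
          · exact absurd ⟨hv, hva, hvb⟩ hmem
          · have : (v : ℕ) ≠ k := fun e => hne (Fin.ext e)
            omega
        case pos =>
          obtain ⟨hmem, hka', hkb'⟩ := hmem
          obtain ⟨-, hka, hkb⟩ := hq kF hmem hka' hkb'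
          right
          set t := q.takeUntil kF hmem with ht
          set d := q.dropUntil kF hmem with hd
          have hspec : t.append d = q := q.take_spec hmem
          have hsupp : q.support = t.support ++ d.support.tail := by
            rw [← hspec, Walk.support_append]
          have hnodup : (t.support ++ d.support.tail).Nodup := by
            rw [← hsupp]; exact hqp.support_nodup
          have hdisj := (List.nodup_append'.mp hnodup).2.2
          have hbd : b ∈ d.support.tail := by
            have hb : b ∈ d.support := d.end_mem_support
            rw [d.support_eq_cons] at hb
            rcases List.mem_cons.mp hb with h | h
            · exact absurd h.symm hkb'
            · exact h
          have hbt : b ∉ t.support := fun h => hdisj h hbd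
          have had : a ∉ d.support.tail := fun h => hdisj t.start_mem_support h
          have hlt : ∀ v : Fin n, (v : ℕ) < k + 1 → v ≠ kF → (v : ℕ) < k := by
            intro v h1 h2
            have : (v : ℕ) ≠ k := fun e => h2 (Fin.ext e)
            omega
          refine ⟨hab, hka, hkb, (ih kF a).mpr ⟨hka.ne, t.reverse, ?_⟩,
            (ih kF b).mpr ⟨hkb.ne, d, ?_⟩⟩
          · intro v hv hvk hva
            rw [Walk.support_reverse, List.mem_reverse] at hv
            have hvb : v ≠ b := fun e => hbt (e ▸ hv)
            obtain ⟨g1, g2, g3⟩ := hq v (q.support_takeUntil_subset hmem hv) hva hvb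
            exact ⟨hlt v g1 hvk, by rw [Fin.lt_def]; exact hlt v g1 hvk, g2⟩
          · intro v hv hvk hvb
            have hvtail : v ∈ d.support.tail := by
              rw [d.support_eq_cons] at hv
              rcases List.mem_cons.mp hv with h | h
              · exact absurd h hvk
              · exact h
            have hva : v ≠ a := fun e => had (e ▸ hvtail)
            obtain ⟨g1, g2, g3⟩ := hq v (q.support_dropUntil_subset hmem hv) hva hvb
            exact ⟨hlt v g1 hvk, by rw [Fin.lt_def]; exact hlt v g1 hvk, g3⟩

/-- Fill-path characterization of fill: `(i,j)` is an edge of the fill graph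
iff the graph contains a simple path from `i` to `j` whose internal vertices
all have indices smaller than `min i j`. -/
theorem fill_path_characterization {n : ℕ}
    (G : SimpleGraph (Fin n)) (i j : Fin n) (hij : i ≠ j) :
    fillRel G.Adj i j ↔
      ∃ p : G.Walk i j, p.IsPath ∧
        ∀ v ∈ p.support, v ≠ i → v ≠ j → v < min i j := by
  have hfr : fillRel G.Adj i j ↔
      (List.foldl elim G.Adj ((List.finRange n).take n)) i j := by
    rw [fillRel, List.take_of_length_le (by simp)]
  rw [hfr, fill_invariant]
  constructor
  · rintro ⟨hab, p, hp⟩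
    refine ⟨p.bypass, p.bypass_isPath, fun v hv hvi hvj => ?_⟩
    obtain ⟨-, h2, h3⟩ := hp v (p.support_bypass_subset hv) hvi hvj
    exact lt_min h2 h3
  · rintro ⟨p, -, hp⟩
    refine ⟨hij, p, fun v hv hvi hvj => ?_⟩
    obtain ⟨h2, h3⟩ := lt_min_iff.mp (hp v hv hvi hvj)
    exact ⟨v.isLt, h2, h3⟩
end

section
/- If A_{i,j} ≠ 0 or (i,j) is a fill position in the Cholesky factorization of a symmetric positive-definite matrix A, then (i,j) is an edge of the fill graph G_A⁺. -/
open Matrix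

/-- The pattern graph of a symmetric matrix. -/
def patternRel {n : ℕ} (A : Matrix (Fin n) (Fin n) ℝ) : Fin n → Fin n → Prop :=
  fun i j => i ≠ j ∧ A i j ≠ 0

namespace FillAux
variable {n : ℕ}

/-- Partial fill: eliminate only the first `k` vertices. -/
def fillUpTo (k : ℕ) (G : Fin n → Fin n → Prop) : Fin n → Fin n → Prop :=
  ((List.finRange n).take k).foldl elim G

lemma foldl_elim_mono (l : List (Fin n)) (G : Fin n → Fin n → Prop) {a b : Fin n}
    (h : G a b) : l.foldl elim G a b := by
  induction l generalizing G with
  | nil => exact h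
  | cons x xs ih => exact ih _ (Or.inl h)

lemma fillUpTo_mono {k k' : ℕ} (hk : k ≤ k') (G : Fin n → Fin n → Prop) {a b : Fin n}
    (h : fillUpTo k G a b) : fillUpTo k' G a b := by
  unfold fillUpTo at *
  rw [← List.take_append_drop k ((List.finRange n).take k'), List.take_take,
    min_eq_left hk, List.foldl_append]
  exact foldl_elim_mono _ _ h

lemma fillRel_of_fillUpTo {k : ℕ} (hk : k ≤ n) (G : Fin n → Fin n → Prop) {a b : Fin n}
    (h : fillUpTo k G a b) : fillRel G a b := by
  have := fillUpTo_mono hk G h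
  unfold fillUpTo at this
  rwa [List.take_of_length_le (by simp)] at this

lemma foldl_elim_symm (l : List (Fin n)) (G : Fin n → Fin n → Prop)
    (hG : ∀ a b, G a b → G b a) {a b : Fin n} (h : l.foldl elim G a b) :
    l.foldl elim G b a := by
  induction l generalizing G with
  | nil => exact hG _ _ h
  | cons x xs ih =>
      refine ih _ ?_ h
      rintro a b (h | ⟨hne, hxa, hxb, h1, h2⟩)
      · exact Or.inl (hG _ _ h)
      · exact Or.inr ⟨hne.symm, hxb, hxa, h2, h1⟩

lemma fillUpTo_symm {k : ℕ} (G : Fin n → Fin n → Prop)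
    (hG : ∀ a b, G a b → G b a) {a b : Fin n} (h : fillUpTo k G a b) :
    fillUpTo k G b a := foldl_elim_symm _ _ hG h

lemma step {G : Fin n → Fin n → Prop} {m a b : Fin n} (hma : m < a) (hmb : m < b)
    (hab : a ≠ b) (h1 : fillUpTo (m : ℕ) G m a) (h2 : fillUpTo (m : ℕ) G m b) :
    fillUpTo ((m : ℕ) + 1) G a b := by
  unfold fillUpTo at *
  have hget : (List.finRange n)[(m : ℕ)]? = some m := by
    rw [List.getElem?_eq_getElem (by simp [m.isLt])]
    simp
  rw [List.take_succ, hget]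
  simp only [Option.toList_some, List.foldl_append, List.foldl_cons, List.foldl_nil]
  exact Or.inr ⟨hab, hma, hmb, h1, h2⟩

lemma diag_ne_zero (A L : Matrix (Fin n) (Fin n) ℝ) (hA : A.PosDef)
    (hlower : ∀ i j : Fin n, i < j → L i j = 0)
    (hfac : A = L * Lᵀ) (m : Fin n) : L m m ≠ 0 := by
  have hdet : A.det ≠ 0 := ne_of_gt hA.det_pos
  have hLt : Lᵀ.det = ∏ p, L p p := by
    have := Matrix.det_of_upperTriangular (M := Lᵀ) (fun p q hq => hlower q p hq)
    simpa using this
  have : A.det = (∏ p, L p p) * (∏ p, L p p) := by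
    rw [hfac, Matrix.det_mul, ← Matrix.det_transpose L, hLt]
  rw [this] at hdet
  intro hm
  exact hdet (mul_eq_zero_of_left
    (Finset.prod_eq_zero (f := fun p => L p p) (Finset.mem_univ m) hm) _)

lemma chol_rec (A L : Matrix (Fin n) (Fin n) ℝ)
    (hlower : ∀ i j : Fin n, i < j → L i j = 0)
    (hfac : A = L * Lᵀ) (a m : Fin n) :
    A a m = L a m * L m m + ∑ p ∈ Finset.univ.filter (fun p : Fin n => p < m),
      L a p * L m p := by
  have h1 : A a m = ∑ p : Fin n, L a p * L m p := by
    rw [hfac]; rfl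
  rw [h1, ← Finset.sum_filter_add_sum_filter_not Finset.univ (fun p : Fin n => p < m)]
  have h2 : ∑ p ∈ Finset.univ.filter (fun p : Fin n => ¬ p < m), L a p * L m p
      = L a m * L m m := by
    apply Finset.sum_eq_single m
    · intro p hp hpm
      simp only [Finset.mem_filter] at hp
      have : m < p := lt_of_le_of_ne (not_lt.mp hp.2) (Ne.symm hpm)
      rw [hlower m p this, mul_zero]
    · intro hm; simp at hm
  rw [h2]; ring

/-- Key lemma: a nonzero of `L` below the diagonal is an edge of the partial
fill graph. -/
lemma key (A L : Matrix (Fin n) (Fin n) ℝ) (hA : A.PosDef)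
    (hlower : ∀ i j : Fin n, i < j → L i j = 0)
    (hfac : A = L * Lᵀ)
    (hGsymm : ∀ a b : Fin n, patternRel A a b → patternRel A b a) :
    ∀ N : ℕ, ∀ m a : Fin n, (m : ℕ) = N → m < a → L a m ≠ 0 →
      fillUpTo (m : ℕ) (patternRel A) a m := by
  intro N
  induction N using Nat.strong_induction_on with
  | _ N ih =>
    intro m a hmN hma hL
    by_cases hAam : A a m ≠ 0
    · exact foldl_elim_mono _ _ ⟨hma.ne', hAam⟩
    · push_neg at hAam
      have hrec := chol_rec A L hlower hfac a m
      rw [hAam] at hrec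
      have hsum : ∑ p ∈ Finset.univ.filter (fun p : Fin n => p < m),
          L a p * L m p ≠ 0 := by
        intro h0
        rw [h0, add_zero] at hrec
        exact mul_ne_zero hL (diag_ne_zero A L hA hlower hfac m) hrec.symm
      obtain ⟨p, hp, hpne⟩ := Finset.exists_ne_zero_of_sum_ne_zero hsum
      simp only [Finset.mem_filter, Finset.mem_univ, true_and] at hp
      have hLa : L a p ≠ 0 := left_ne_zero_of_mul hpne
      have hLm : L m p ≠ 0 := right_ne_zero_of_mul hpne
      have hpN : (p : ℕ) < N := hmN ▸ hp
      have ha : fillUpTo (p : ℕ) (patternRel A) a p :=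
        ih _ hpN p a rfl (hp.trans hma) hLa
      have hm : fillUpTo (p : ℕ) (patternRel A) m p :=
        ih _ hpN p m rfl hp hLm
      have hstep := step (hp.trans hma) hp hma.ne'
        (fillUpTo_symm _ hGsymm ha) (fillUpTo_symm _ hGsymm hm)
      exact fillUpTo_mono (by omega) _ hstep

end FillAux

open FillAux

/-- Nonzeros of `A` and fill positions of its Cholesky factorization are edges
of the fill graph. -/
theorem fill_subset_fill_graph {n : ℕ}
    (A L : Matrix (Fin n) (Fin n) ℝ)
    (hA : A.PosDef)
    (hlower : ∀ i j : Fin n, i < j → L i j = 0)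
    (hfac : A = L * Lᵀ)
    (i j : Fin n) (hji : j < i)
    (h : A i j ≠ 0 ∨
      (A i j = 0 ∧ ∃ k : ℕ, k < (j : ℕ) ∧
        A i j - ∑ m ∈ Finset.univ.filter (fun m : Fin n => (m : ℕ) < k),
          L i m * L j m ≠ 0)) :
    fillRel (patternRel A) i j := by
  have hAsymm : ∀ a b : Fin n, A a b = A b a := by
    intro a b
    have hT : Aᵀ = A := by rw [hfac]; simp [Matrix.transpose_mul]
    exact congrFun (congrFun hT b) a
  have hGsymm : ∀ a b : Fin n, patternRel A a b → patternRel A b a := by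
    rintro a b ⟨hne, hab⟩
    exact ⟨hne.symm, by rwa [hAsymm b a]⟩
  rcases h with h | ⟨hA0, k, hkj, hsum⟩
  · exact foldl_elim_mono _ _ ⟨hji.ne', h⟩
  · rw [hA0, zero_sub, neg_ne_zero] at hsum
    obtain ⟨p, hp, hpne⟩ := Finset.exists_ne_zero_of_sum_ne_zero hsum
    simp only [Finset.mem_filter, Finset.mem_univ, true_and] at hp
    have hpj : p < j := by
      have : (p : ℕ) < (j : ℕ) := hp.trans hkj
      exact this
    have hLi : L i p ≠ 0 := left_ne_zero_of_mul hpne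
    have hLj : L j p ≠ 0 := right_ne_zero_of_mul hpne
    have hi : fillUpTo (p : ℕ) (patternRel A) i p :=
      key A L hA hlower hfac hGsymm (p : ℕ) p i rfl (hpj.trans hji) hLi
    have hj : fillUpTo (p : ℕ) (patternRel A) j p :=
      key A L hA hlower hfac hGsymm (p : ℕ) p j rfl hpj hLj
    have hstep := step (hpj.trans hji) hpj hji.ne'
      (fillUpTo_symm _ hGsymm hi) (fillUpTo_symm _ hGsymm hj)
    exact fillRel_of_fillUpTo (by omega) _ hstep
end

section
/- Let B = LLᵀ be symmetric positive semidefinite with null(B) = null(A) for a symmetric matrix A. Then a nonzero scalar λ is an eigenvalue of B⁺A if and only if it is an eigenvalue of (L⁺)A(L⁺)ᵀ, where X⁺ denotes the Moore–Penrose pseudo-inverse. -/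
open Matrix

/-- `P` is the Moore–Penrose pseudo-inverse of `M`. -/
def IsMoorePenrose {n m : ℕ} (M : Matrix (Fin n) (Fin m) ℝ)
    (P : Matrix (Fin m) (Fin n) ℝ) : Prop :=
  M * P * M = M ∧ P * M * P = P ∧ (M * P)ᵀ = M * P ∧ (P * M)ᵀ = P * M

lemma mp_unique {n m : ℕ} (M : Matrix (Fin n) (Fin m) ℝ)
    (P Q : Matrix (Fin m) (Fin n) ℝ)
    (hP : IsMoorePenrose M P) (hQ : IsMoorePenrose M Q) : P = Q := by
  obtain ⟨p1, p2, p3, p4⟩ := hP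
  obtain ⟨q1, q2, q3, q4⟩ := hQ
  have hMQ : M * Q = M * P := by
    calc M * Q = (M * Q)ᵀ := q3.symm
      _ = Qᵀ * Mᵀ := by rw [transpose_mul]
      _ = Qᵀ * (M * P * M)ᵀ := by rw [p1]
      _ = Qᵀ * (Mᵀ * (M * P)ᵀ) := by rw [transpose_mul]
      _ = Qᵀ * (Mᵀ * (M * P)) := by rw [p3]
      _ = (Qᵀ * Mᵀ) * (M * P) := by rw [Matrix.mul_assoc]
      _ = (M * Q)ᵀ * (M * P) := by rw [transpose_mul]
      _ = (M * Q) * (M * P) := by rw [q3]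
      _ = (M * Q * M) * P := by simp only [Matrix.mul_assoc]
      _ = M * P := by rw [q1]
  have hQM : Q * M = P * M := by
    calc Q * M = (Q * M)ᵀ := q4.symm
      _ = Mᵀ * Qᵀ := by rw [transpose_mul]
      _ = (M * (P * M))ᵀ * Qᵀ := by rw [← Matrix.mul_assoc, p1]
      _ = ((P * M)ᵀ * Mᵀ) * Qᵀ := by rw [transpose_mul]
      _ = ((P * M) * Mᵀ) * Qᵀ := by rw [p4]
      _ = (P * M) * (Mᵀ * Qᵀ) := by rw [Matrix.mul_assoc]
      _ = (P * M) * (Q * M)ᵀ := by rw [transpose_mul]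
      _ = (P * M) * (Q * M) := by rw [q4]
      _ = P * (M * Q * M) := by simp only [Matrix.mul_assoc]
      _ = P * M := by rw [q1]
  calc P = P * M * P := p2.symm
    _ = Q * M * P := by rw [hQM]
    _ = Q * (M * P) := by rw [Matrix.mul_assoc]
    _ = Q * (M * Q) := by rw [hMQ]
    _ = Q * M * Q := by simp only [Matrix.mul_assoc]
    _ = Q := q2

lemma mp_of_fac {n : ℕ} (L Lp : Matrix (Fin n) (Fin n) ℝ)
    (hLp : IsMoorePenrose L Lp) : IsMoorePenrose (L * Lᵀ) (Lpᵀ * Lp) := by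
  obtain ⟨l1, l2, l3, l4⟩ := hLp
  have h1 : ∀ X : Matrix (Fin n) (Fin n) ℝ, L * (Lp * (L * X)) = L * X := by
    intro X; rw [← Matrix.mul_assoc, ← Matrix.mul_assoc, l1]
  have h2 : ∀ X : Matrix (Fin n) (Fin n) ℝ, Lp * (L * (Lp * X)) = Lp * X := by
    intro X; rw [← Matrix.mul_assoc, ← Matrix.mul_assoc, l2]
  have h3' : Lᵀ * Lpᵀ = Lp * L := by rw [← transpose_mul, l4]
  have h3 : ∀ X : Matrix (Fin n) (Fin n) ℝ, Lᵀ * (Lpᵀ * X) = Lp * (L * X) := by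
    intro X; rw [← Matrix.mul_assoc, h3', Matrix.mul_assoc]
  have h4' : Lpᵀ * Lᵀ = L * Lp := by rw [← transpose_mul, l3]
  have h2' : Lp * (L * Lp) = Lp := by rw [← Matrix.mul_assoc, l2]
  have h1' : L * (Lp * L) = L := by rw [← Matrix.mul_assoc, l1]
  have h5 : Lp * (L * Lᵀ) = Lᵀ := by
    rw [← Matrix.mul_assoc, ← l4, ← transpose_mul, h1']
  have hBP : (L * Lᵀ) * (Lpᵀ * Lp) = L * Lp := by
    simp only [Matrix.mul_assoc]
    rw [h3, h2']
  have hPB : (Lpᵀ * Lp) * (L * Lᵀ) = L * Lp := by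
    simp only [Matrix.mul_assoc]
    rw [h5, h4']
  refine ⟨?_, ?_, ?_, ?_⟩
  · rw [hBP, Matrix.mul_assoc, h5]
  · rw [Matrix.mul_assoc, hBP]
    simp only [Matrix.mul_assoc]
    rw [h2']
  · rw [hBP, l3]
  · rw [hPB, l3]

lemma swap_eig {n : ℕ} (X Y : Matrix (Fin n) (Fin n) ℝ) (lam : ℝ) (hlam : lam ≠ 0)
    (h : ∃ v : Fin n → ℝ, v ≠ 0 ∧ (X * Y).mulVec v = lam • v) :
    ∃ w : Fin n → ℝ, w ≠ 0 ∧ (Y * X).mulVec w = lam • w := by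
  obtain ⟨v, hv, heig⟩ := h
  refine ⟨Y.mulVec v, ?_, ?_⟩
  · intro h0
    apply hv
    have hz : (X * Y).mulVec v = 0 := by
      rw [← Matrix.mulVec_mulVec, h0, Matrix.mulVec_zero]
    rw [heig] at hz
    rcases smul_eq_zero.mp hz with h | h
    · exact absurd h hlam
    · exact h
  · rw [Matrix.mulVec_mulVec, Matrix.mul_assoc, ← Matrix.mulVec_mulVec, heig,
      Matrix.mulVec_smul]

theorem eigenvalues_pseudoinverse_preconditioning {n : ℕ}
    (A B L Bp Lp : Matrix (Fin n) (Fin n) ℝ)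
    (hA : A = Aᵀ)
    (hfac : B = L * Lᵀ)
    (hBpsd : B.PosSemidef)
    (hnull : ∀ v : Fin n → ℝ, B.mulVec v = 0 ↔ A.mulVec v = 0)
    (hBp : IsMoorePenrose B Bp) (hLp : IsMoorePenrose L Lp)
    (lam : ℝ) (hlam : lam ≠ 0) :
    (∃ v : Fin n → ℝ, v ≠ 0 ∧ (Bp * A).mulVec v = lam • v) ↔
    (∃ v : Fin n → ℝ, v ≠ 0 ∧ (Lp * A * Lpᵀ).mulVec v = lam • v) := by
  have hBpeq : Bp = Lpᵀ * Lp := by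
    apply mp_unique B
    · exact hBp
    · rw [hfac]; exact mp_of_fac L Lp hLp
  have e1 : Bp * A = Lpᵀ * (Lp * A) := by rw [hBpeq, Matrix.mul_assoc]
  have e2 : Lp * A * Lpᵀ = (Lp * A) * Lpᵀ := rfl
  rw [e1, e2]
  constructor
  · exact swap_eig Lpᵀ (Lp * A) lam hlam
  · exact swap_eig (Lp * A) Lpᵀ lam hlam
end
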